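/- arXiv:math/0110024 — 2 statements merged into one kernel-verified Lean document; each statement's English description precedes it below -/
import Mathlib

section
/- In a simply-laced root system (type A, D, or E), if b, c ∈ P_− are antidominant weights with b_− ≺ c_− (i.e., c − b ∈ Q_+ \ {0} after sign conventions: b − c ∈ Q_−, b ≠ c), then b can be obtained from c by a chain of steps, each subtracting from the current antidominant weight the highest root θ_t of the root subsystem generated by a connected component I_t of the set {i : (x, αᵢ) ≤ 0} (where x is the current difference), each intermediate weight remaining antidominant. -/
open scoped RealInnerProductSpace Pointwise BigOperators

noncomputable section

namespace SimplyLacedChain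

variable {n : ℕ}

abbrev V (n : ℕ) := EuclideanSpace ℝ (Fin n)

/-- Adjacency in the Dynkin diagram of the simple roots. -/
def adj (simple : Fin n → V n) (i j : Fin n) : Prop :=
  i ≠ j ∧ ⟪simple i, simple j⟫ ≠ 0

/-- `I` is connected in the Dynkin diagram. -/
def ConnIn (simple : Fin n → V n) (I : Set (Fin n)) : Prop :=
  ∀ i ∈ I, ∀ j ∈ I,
    Relation.ReflTransGen (fun a c => a ∈ I ∧ c ∈ I ∧ adj simple a c) i j

/-- `θt` is the highest root of the root subsystem generated by `{αᵢ : i ∈ I}`: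
it is a positive root supported on `I`, and it dominates every positive root
supported on `I` with respect to `Q₊`. -/
def IsHighestOf (Rplus : Set (V n)) (simple : Fin n → V n) (I : Set (Fin n))
    (θt : V n) : Prop :=
  θt ∈ Rplus ∧
  (∃ c : Fin n → ℕ, (∀ i, i ∉ I → c i = 0) ∧ θt = ∑ i, (c i : ℝ) • simple i) ∧
  ∀ γ ∈ Rplus,
    (∃ c : Fin n → ℕ, (∀ i, i ∉ I → c i = 0) ∧ γ = ∑ i, (c i : ℝ) • simple i) →
    ∃ c : Fin n → ℕ, θt - γ = ∑ i, (c i : ℝ) • simple i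

/-- One step of the chain towards the target `b`: subtract from the current
antidominant weight `c'` the highest root `θt` of the subsystem generated by a
connected component `I` of `{i : (b − c', αᵢ) ≤ 0}`, the result `c''` remaining
antidominant. -/
def Step (Rplus : Set (V n)) (simple : Fin n → V n) (b c' c'' : V n) : Prop :=
  ∃ (I : Set (Fin n)) (θt : V n),
    I.Nonempty ∧
    I ⊆ {i | ⟪b - c', simple i⟫ ≤ 0} ∧
    ConnIn simple I ∧
    (∀ j, ⟪b - c', simple j⟫ ≤ 0 → j ∉ I → ∀ i ∈ I, ¬ adj simple j i) ∧
    IsHighestOf Rplus simple I θt ∧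
    c'' = c' - θt ∧
    (∀ i, ⟪c'', simple i⟫ ≤ 0)

structure Ctx (n : ℕ) where
  Rset : Set (V n)
  Rplus : Set (V n)
  simple : Fin n → V n
  hfin : Rset.Finite
  hR : Rset = Rplus ∪ (-Rplus)
  hdisj : Disjoint Rplus (-Rplus)
  h0 : (0 : V n) ∉ Rset
  hsimple : ∀ i, simple i ∈ Rplus
  hindep : LinearIndependent ℝ simple
  hpos_sum : ∀ α ∈ Rplus, ∃ c : Fin n → ℕ, α = ∑ i, (c i : ℝ) • simple i
  hlaced : ∀ α ∈ Rset, ⟪α, α⟫ = 2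
  hrefl : ∀ α ∈ Rset, ∀ β ∈ Rset, β - ⟪β, α⟫ • α ∈ Rset
  hcart : ∀ α ∈ Rset, ∀ β ∈ Rset, ∃ m : ℤ, ⟪β, α⟫ = m

namespace Ctx

variable (C : Ctx n)

lemma rplus_sub : C.Rplus ⊆ C.Rset := by
  rw [C.hR]; exact Set.subset_union_left

lemma simple_mem (i : Fin n) : C.simple i ∈ C.Rset := C.rplus_sub (C.hsimple i)

lemma simple_ne_zero (i : Fin n) : C.simple i ≠ 0 := by
  intro h; exact C.h0 (h ▸ C.simple_mem i)

lemma neg_mem {α : V n} (h : α ∈ C.Rset) : -α ∈ C.Rset := by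
  rw [C.hR] at h ⊢
  rcases h with h | h
  · exact Or.inr (by simpa using h)
  · exact Or.inl (by simpa using h)

lemma inner_sum_left (c : Fin n → ℝ) (v : V n) :
    ⟪∑ i, c i • C.simple i, v⟫ = ∑ i, c i * ⟪C.simple i, v⟫ := by
  rw [sum_inner]
  exact Finset.sum_congr rfl fun i _ => real_inner_smul_left _ _ _

lemma inner_sum_right (c : Fin n → ℝ) (v : V n) :
    ⟪v, ∑ i, c i • C.simple i⟫ = ∑ i, c i * ⟪v, C.simple i⟫ := by
  rw [inner_sum]
  exact Finset.sum_congr rfl fun i _ => real_inner_smul_right _ _ _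

lemma sum_single (r : ℝ) (i : Fin n) :
    ∑ k, (if k = i then r else 0) • C.simple k = r • C.simple i := by
  simp [ite_smul]

lemma coeff_unique {c d : Fin n → ℝ}
    (h : ∑ i, c i • C.simple i = ∑ i, d i • C.simple i) : c = d := by
  have h2 := Fintype.linearIndependent_iff.mp C.hindep (fun i => c i - d i)
  have h3 : ∑ i, (c i - d i) • C.simple i = 0 := by
    simp [sub_smul, Finset.sum_sub_distrib, h]
  funext i
  have := h2 h3 i
  linarith [this]

lemma sum_ne_zero_of_ne {c : Fin n → ℕ} (hc : ∃ i, c i ≠ 0) :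
    ∑ i, (c i : ℝ) • C.simple i ≠ 0 := by
  intro h
  obtain ⟨i, hi⟩ := hc
  have h0 : ∑ i, (c i : ℝ) • C.simple i = ∑ i, (0 : ℝ) • C.simple i := by simp [h]
  have := congrFun (C.coeff_unique h0) i
  simp at this
  exact hi this

lemma mem_rplus_of_nat {v : V n} (hv : v ∈ C.Rset) (c : Fin n → ℕ)
    (h : v = ∑ i, (c i : ℝ) • C.simple i) : v ∈ C.Rplus := by
  have hvne : v ≠ 0 := fun h' => C.h0 (h' ▸ hv)
  rw [C.hR] at hv
  rcases hv with hv | hv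
  · exact hv
  · exfalso
    have hnv : -v ∈ C.Rplus := by simpa using hv
    obtain ⟨d, hd⟩ := C.hpos_sum _ hnv
    have hsum : ∑ i, ((c i : ℝ) + (d i : ℝ)) • C.simple i = ∑ i, (0:ℝ) • C.simple i := by
      simp [add_smul, Finset.sum_add_distrib, ← h, ← hd]
    have := C.coeff_unique hsum
    apply hvne
    rw [h]
    have hc0 : ∀ i, (c i : ℝ) = 0 := by
      intro i
      have hi := congrFun this i
      change (c i : ℝ) + (d i : ℝ) = 0 at hi
      have hi2 : c i + d i = 0 := by exact_mod_cast hi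
      have : c i = 0 := by omega
      simp [this]
    simp [hc0]

lemma root_sub {α β : V n} (hα : α ∈ C.Rset) (hβ : β ∈ C.Rset)
    (hpos : 0 < ⟪α, β⟫) (hne : α ≠ β) : α - β ∈ C.Rset := by
  obtain ⟨m, hm⟩ := C.hcart β hβ α hα
  have hm1 : 1 ≤ m := by
    have : (0:ℝ) < m := hm ▸ hpos
    exact_mod_cast this
  have hc : ⟪β, α⟫ = (m:ℝ) := by rw [real_inner_comm]; exact hm
  have hnorm : ⟪α - β, α - β⟫ = 4 - 2 * m := by
    have e1 : ⟪α - β, α - β⟫ = ⟪α,α⟫ - ⟪α,β⟫ - ⟪β,α⟫ + ⟪β,β⟫ := by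
      rw [inner_sub_left, inner_sub_right, inner_sub_right]; ring
    rw [e1, C.hlaced _ hα, C.hlaced _ hβ, hm, hc]; ring
  have hm2 : m < 2 := by
    by_contra h
    push_neg at h
    have hn0 : ⟪α - β, α - β⟫ ≤ 0 := by
      rw [hnorm]
      have : (2:ℝ) ≤ m := by exact_mod_cast h
      linarith
    have := real_inner_self_nonneg (x := α - β)
    have heq0 : ⟪α - β, α - β⟫ = 0 := le_antisymm hn0 this
    have : α - β = 0 := inner_self_eq_zero.mp heq0
    exact hne (sub_eq_zero.mp this)
  have hmeq : m = 1 := le_antisymm (by omega) hm1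
  have := C.hrefl β hβ α hα
  rwa [hm, hmeq, Int.cast_one, one_smul] at this

/-- Integer matrix of pairings of simple roots. -/
def A (i j : Fin n) : ℤ := (C.hcart _ (C.simple_mem j) _ (C.simple_mem i)).choose

lemma A_spec (i j : Fin n) : ((C.A i j : ℤ) : ℝ) = ⟪C.simple i, C.simple j⟫ :=
  (C.hcart _ (C.simple_mem j) _ (C.simple_mem i)).choose_spec.symm

lemma A_diag (i : Fin n) : C.A i i = 2 := by
  have := C.A_spec i i
  rw [C.hlaced _ (C.simple_mem i)] at this
  exact_mod_cast this

lemma no_nat_rep_sub {i j : Fin n} (hij : i ≠ j) (c : Fin n → ℕ)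
    (h : C.simple i - C.simple j = ∑ k, (c k : ℝ) • C.simple k) : False := by
  have h1 : ∑ k, ((if k = i then (1:ℝ) else 0) - (if k = j then (1:ℝ) else 0)) • C.simple k
      = ∑ k, (c k : ℝ) • C.simple k := by
    rw [← h]
    simp only [sub_smul, Finset.sum_sub_distrib, C.sum_single, one_smul]
  have h2 := congrFun (C.coeff_unique h1) j
  simp [Ne.symm hij] at h2
  have h3 : (0:ℝ) ≤ (c j : ℝ) := Nat.cast_nonneg _
  linarith

lemma simple_ne {i j : Fin n} (hij : i ≠ j) : C.simple i ≠ C.simple j := by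
  intro heq
  have h1 : ∑ k, (if k = i then (1:ℝ) else 0) • C.simple k
      = ∑ k, (if k = j then (1:ℝ) else 0) • C.simple k := by
    rw [C.sum_single, C.sum_single, one_smul, one_smul, heq]
  have := congrFun (C.coeff_unique h1) i
  simp [hij] at this

lemma simple_pair_nonpos {i j : Fin n} (hij : i ≠ j) : ⟪C.simple i, C.simple j⟫ ≤ 0 := by
  by_contra h
  push_neg at h
  have hsub := C.root_sub (C.simple_mem i) (C.simple_mem j) h (C.simple_ne hij)
  rw [C.hR] at hsub
  rcases hsub with hsub | hsub
  · obtain ⟨c, hc⟩ := C.hpos_sum _ hsub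
    exact C.no_nat_rep_sub hij c hc
  · have hsub' : -(C.simple i - C.simple j) ∈ C.Rplus := by simpa using hsub
    obtain ⟨c, hc⟩ := C.hpos_sum _ hsub'
    have : C.simple j - C.simple i = ∑ k, (c k : ℝ) • C.simple k := by
      rw [← hc]; abel
    exact C.no_nat_rep_sub (Ne.symm hij) c this

lemma inner_int (v : V n) (k : Fin n → ℤ) (hv : v = ∑ i, (k i : ℝ) • C.simple i)
    (j : Fin n) : ⟪v, C.simple j⟫ = ((∑ i, k i * C.A i j : ℤ) : ℝ) := by
  rw [hv, C.inner_sum_left]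
  push_cast
  exact Finset.sum_congr rfl fun i _ => by rw [C.A_spec i j]

lemma inner_int_nat (v : V n) (k : Fin n → ℕ) (hv : v = ∑ i, (k i : ℝ) • C.simple i)
    (j : Fin n) : ⟪v, C.simple j⟫ = ((∑ i, (k i : ℤ) * C.A i j : ℤ) : ℝ) := by
  apply C.inner_int v (fun i => (k i : ℤ))
  rw [hv]; push_cast; rfl

lemma pair_ge_neg_one {θ : V n} (hθ : θ ∈ C.Rplus) (j : Fin n) :
    (-1 : ℝ) ≤ ⟪θ, C.simple j⟫ := by
  obtain ⟨m, hm⟩ := C.hcart _ (C.simple_mem j) _ (C.rplus_sub hθ)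
  by_contra h
  push_neg at h
  have hm2 : m ≤ -2 := by
    have h1 : (m : ℝ) < -1 := hm ▸ h
    have h2 : m < -1 := by exact_mod_cast h1
    omega
  have hne : θ ≠ -C.simple j := by
    intro heq
    have : θ ∈ -C.Rplus := by
      rw [heq]
      exact Set.neg_mem_neg.mpr (C.hsimple j)
    exact (C.hdisj.ne_of_mem hθ this) rfl
  have hnn : (0:ℝ) ≤ ⟪θ + C.simple j, θ + C.simple j⟫ := real_inner_self_nonneg
  have hexp : ⟪θ + C.simple j, θ + C.simple j⟫ = 4 + 2 * m := by
    have e1 : ⟪θ + C.simple j, θ + C.simple j⟫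
        = ⟪θ,θ⟫ + ⟪θ, C.simple j⟫ + ⟪C.simple j, θ⟫ + ⟪C.simple j, C.simple j⟫ := by
      rw [inner_add_left, inner_add_right, inner_add_right]; ring
    have hc : ⟪C.simple j, θ⟫ = (m:ℝ) := by rw [real_inner_comm]; exact hm
    rw [e1, C.hlaced _ (C.rplus_sub hθ), C.hlaced _ (C.simple_mem j), hm, hc]; ring
  have hm2' : (m:ℝ) ≤ -2 := by exact_mod_cast hm2
  have heq0 : ⟪θ + C.simple j, θ + C.simple j⟫ = 0 := by linarith
  have : θ + C.simple j = 0 := inner_self_eq_zero.mp heq0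
  exact hne (by linear_combination (norm := module) this)

/-- The squared norm of a nonnegative integer combination of simple roots is even. -/
lemma even_norm : ∀ (s : ℕ) (k : Fin n → ℕ), (∑ i, k i) = s →
    ∃ N : ℤ, ⟪∑ i, (k i : ℝ) • C.simple i, ∑ i, (k i : ℝ) • C.simple i⟫ = 2 * N := by
  intro s
  induction s with
  | zero =>
    intro k hk
    have : ∀ i, k i = 0 := by
      intro i
      have := Finset.sum_eq_zero_iff.mp hk
      exact this i (Finset.mem_univ i)
    refine ⟨0, ?_⟩
    simp [this]
  | succ s ih =>
    intro k hk
    have hex : ∃ i, 1 ≤ k i := by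
      by_contra h
      push_neg at h
      have : ∀ i, k i = 0 := fun i => by have := h i; omega
      rw [Finset.sum_eq_zero (fun i _ => this i)] at hk
      omega
    obtain ⟨i0, hi0⟩ := hex
    set k' : Fin n → ℕ := Function.update k i0 (k i0 - 1) with hk'
    have hsum' : (∑ i, k' i) = s := by
      have h1 := Finset.sum_update_of_mem (Finset.mem_univ i0) k (k i0 - 1)
      have hset : Finset.univ \ {i0} = Finset.univ.erase i0 := by
        ext x; simp [Finset.mem_erase, and_comm]
      rw [hset] at h1
      rw [hk', h1]
      have h2 := Finset.add_sum_erase Finset.univ k (Finset.mem_univ i0)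
      omega
    have hdecomp : ∑ i, (k i : ℝ) • C.simple i
        = (∑ i, (k' i : ℝ) • C.simple i) + C.simple i0 := by
      have : ∀ j, (k j : ℝ) = (k' j : ℝ) + (if j = i0 then 1 else 0) := by
        intro j
        by_cases hj : j = i0
        · subst hj
          have h1 : (k' j : ℝ) = (k j : ℝ) - 1 := by
            rw [hk']
            simp only [Function.update_self]
            rw [Nat.cast_sub hi0]
            push_cast; ring
          rw [h1]
          simp
        · simp [hk', Function.update_of_ne hj, hj]
      calc ∑ j, (k j : ℝ) • C.simple j
          = ∑ j, (((k' j : ℝ) + (if j = i0 then 1 else 0)) • C.simple j) := by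
            exact Finset.sum_congr rfl fun j _ => by rw [← this j]
        _ = (∑ j, (k' j : ℝ) • C.simple j) + ∑ j, (if j = i0 then (1:ℝ) else 0) • C.simple j := by
            simp [add_smul, Finset.sum_add_distrib]
        _ = (∑ j, (k' j : ℝ) • C.simple j) + C.simple i0 := by rw [C.sum_single, one_smul]
    obtain ⟨N', hN'⟩ := ih k' hsum'
    set z' := ∑ i, (k' i : ℝ) • C.simple i with hz'
    have hM : ⟪z', C.simple i0⟫ = ((∑ i, (k' i : ℤ) * C.A i i0 : ℤ) : ℝ) :=
      C.inner_int_nat z' k' rfl i0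
    set M : ℤ := ∑ i, (k' i : ℤ) * C.A i i0 with hMdef
    refine ⟨N' + M + 1, ?_⟩
    rw [hdecomp]
    have e1 : ⟪z' + C.simple i0, z' + C.simple i0⟫
        = ⟪z',z'⟫ + ⟪z', C.simple i0⟫ + ⟪C.simple i0, z'⟫ + ⟪C.simple i0, C.simple i0⟫ := by
      rw [inner_add_left, inner_add_right, inner_add_right]; ring
    have hc : ⟪C.simple i0, z'⟫ = (M:ℝ) := by rw [real_inner_comm]; exact hM
    rw [e1, hN', hM, hc, C.hlaced _ (C.simple_mem i0)]
    push_cast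
    ring

/-- If `c u ≥ 1`, `c v = 0`, `u` adjacent to `v`, then the combination pairs
negatively with `αᵥ`. -/
lemma inner_neg_of (c : Fin n → ℕ) (u v : Fin n) (huv : u ≠ v)
    (hadj : ⟪C.simple u, C.simple v⟫ ≠ 0) (hcu : 1 ≤ c u) (hcv : c v = 0) :
    ⟪∑ i, (c i : ℝ) • C.simple i, C.simple v⟫ < 0 := by
  rw [C.inner_sum_left]
  have hterm : ∀ k, k ≠ u → (c k : ℝ) * ⟪C.simple k, C.simple v⟫ ≤ 0 := by
    intro k hk
    by_cases hkv : k = v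
    · subst hkv; simp [hcv]
    · exact mul_nonpos_of_nonneg_of_nonpos (Nat.cast_nonneg _) (C.simple_pair_nonpos hkv)
  have hu : (c u : ℝ) * ⟪C.simple u, C.simple v⟫ < 0 := by
    apply mul_neg_of_pos_of_neg
    · exact_mod_cast Nat.lt_of_lt_of_le Nat.zero_lt_one hcu
    · exact lt_of_le_of_ne (C.simple_pair_nonpos huv) hadj
  calc ∑ k, (c k : ℝ) * ⟪C.simple k, C.simple v⟫
      = (c u : ℝ) * ⟪C.simple u, C.simple v⟫
        + ∑ k ∈ Finset.univ.erase u, (c k : ℝ) * ⟪C.simple k, C.simple v⟫ :=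
        (Finset.add_sum_erase _ _ (Finset.mem_univ u)).symm
    _ ≤ (c u : ℝ) * ⟪C.simple u, C.simple v⟫ + 0 := by
        gcongr
        exact Finset.sum_nonpos fun k hk => hterm k (Finset.ne_of_mem_erase hk)
    _ < 0 := by linarith

lemma cast_ite_nat (P : Prop) [Decidable P] :
    (((if P then (1:ℕ) else 0) : ℕ) : ℝ) = if P then (1:ℝ) else 0 := by
  split <;> simp

lemma sum_indicator (i : Fin n) :
    ∑ k, (((if k = i then (1:ℕ) else 0) : ℕ) : ℝ) • C.simple k = C.simple i := by
  have h : ∀ k : Fin n, (((if k = i then (1:ℕ) else 0) : ℕ) : ℝ) • C.simple k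
      = (if k = i then (1:ℝ) else 0) • C.simple k := by
    intro k; rw [cast_ite_nat]
  rw [Finset.sum_congr rfl (fun k _ => h k), C.sum_single, one_smul]

lemma highest (I : Set (Fin n)) (hne : I.Nonempty) (hconn : ConnIn C.simple I) :
    ∃ (θ : V n) (m : Fin n → ℕ),
      θ ∈ C.Rplus ∧ (∀ i, i ∉ I → m i = 0) ∧
      θ = ∑ i, (m i : ℝ) • C.simple i ∧ (∀ i ∈ I, 1 ≤ m i) ∧
      (∀ i ∈ I, 0 ≤ ⟪θ, C.simple i⟫) ∧
      (∀ γ ∈ C.Rplus,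
        (∃ c : Fin n → ℕ, (∀ i, i ∉ I → c i = 0) ∧ γ = ∑ i, (c i : ℝ) • C.simple i) →
        ∃ d : Fin n → ℕ, θ - γ = ∑ i, (d i : ℝ) • C.simple i) := by
  classical
  haveI : Nonempty (Fin n) := ⟨hne.some⟩
  -- the set of positive roots supported on I
  set F : Set (V n) := {γ | γ ∈ C.Rplus ∧
    ∃ c : Fin n → ℕ, (∀ i, i ∉ I → c i = 0) ∧ γ = ∑ i, (c i : ℝ) • C.simple i} with hFdef
  have hFsub : F ⊆ C.Rset := fun γ hγ => C.rplus_sub hγ.1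
  have hFfin : F.Finite := C.hfin.subset hFsub
  obtain ⟨i1, hi1⟩ := hne
  have hFne : F.Nonempty := by
    refine ⟨C.simple i1, C.hsimple i1, fun k => if k = i1 then 1 else 0, ?_, ?_⟩
    · intro i hiI
      have : i ≠ i1 := fun h => hiI (h ▸ hi1)
      simp [this]
    · exact (C.sum_indicator i1).symm
  -- the height functional
  have hcard : Fintype.card (Fin n) = Module.finrank ℝ (V n) := by
    simp [finrank_euclideanSpace_fin]
  set B := basisOfLinearIndependentOfCardEqFinrank C.hindep hcard with hBdef
  have hB : ⇑B = C.simple := coe_basisOfLinearIndependentOfCardEqFinrank _ _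
  set φ : V n → ℝ := fun v => B.sumCoords v with hφdef
  have hφsimple : ∀ i, φ (C.simple i) = 1 := by
    intro i
    have : C.simple i = B i := by rw [hB]
    rw [hφdef, this]
    simp [Module.Basis.coe_sumCoords, Module.Basis.repr_self]
  have hφ : ∀ c : Fin n → ℝ, φ (∑ i, c i • C.simple i) = ∑ i, c i := by
    intro c
    rw [hφdef]
    simp only
    rw [map_sum]
    refine Finset.sum_congr rfl fun i _ => ?_
    rw [map_smul]
    have := hφsimple i
    rw [hφdef] at this
    simp only at this
    rw [this]
    simp
  have hφsub : ∀ v w : V n, φ (v - w) = φ v - φ w := by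
    intro v w; rw [hφdef]; simp [map_sub]
  -- subtracting equal-φ elements forces equality
  have hzero : ∀ (γ δ : V n) (e : Fin n → ℕ),
      δ - γ = ∑ i, (e i : ℝ) • C.simple i → φ δ ≤ φ γ → δ = γ := by
    intro γ δ e he hle
    have h1 : φ δ - φ γ = ∑ i, (e i : ℝ) := by rw [← hφsub, he, hφ]
    have h2 : ∑ i, (e i : ℝ) = 0 :=
      le_antisymm (by linarith) (Finset.sum_nonneg fun i _ => Nat.cast_nonneg _)
    have h3 : ∀ i ∈ Finset.univ, (e i : ℝ) = 0 :=
      (Finset.sum_eq_zero_iff_of_nonneg (fun i _ => Nat.cast_nonneg _)).mp h2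
    have h4 : δ - γ = 0 := by
      rw [he]
      exact Finset.sum_eq_zero fun i hi => by rw [h3 i hi, zero_smul]
    exact sub_eq_zero.mp h4
  -- maximal elements
  set IsMax : V n → Prop := fun γ => γ ∈ F ∧ ∀ δ ∈ F,
    (∃ e : Fin n → ℕ, δ - γ = ∑ i, (e i : ℝ) • C.simple i) → δ = γ with hIsMaxdef
  -- adding a simple root when pairing is negative
  have hadd : ∀ γ, γ ∈ F → ∀ i ∈ I, ⟪γ, C.simple i⟫ < 0 → γ + C.simple i ∈ F := by
    intro γ hγ i hiI hneg
    obtain ⟨hγR, c, hc0, hcrep⟩ := hγ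
    have hne' : γ ≠ -C.simple i := by
      intro heq
      exact (C.hdisj.ne_of_mem hγR (by rw [heq]; exact Set.neg_mem_neg.mpr (C.hsimple i))) rfl
    have hpos : 0 < ⟪γ, -C.simple i⟫ := by rw [inner_neg_right]; linarith
    have hmem : γ + C.simple i ∈ C.Rset := by
      have := C.root_sub (C.rplus_sub hγR) (C.neg_mem (C.simple_mem i)) hpos hne'
      simpa [sub_neg_eq_add] using this
    have hrep : γ + C.simple i
        = ∑ k, (((c k + if k = i then 1 else 0 : ℕ)) : ℝ) • C.simple k := by
      have hterm : ∀ k, (((c k + if k = i then 1 else 0 : ℕ)) : ℝ) • C.simple k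
          = (c k : ℝ) • C.simple k + (((if k = i then (1:ℕ) else 0) : ℕ) : ℝ) • C.simple k := by
        intro k; push_cast; rw [add_smul]
      rw [Finset.sum_congr rfl (fun k _ => hterm k), Finset.sum_add_distrib,
        C.sum_indicator i, ← hcrep]
    refine ⟨C.mem_rplus_of_nat hmem _ hrep, _, ?_, hrep⟩
    intro k hkI
    have hki : k ≠ i := fun h => hkI (h ▸ hiI)
    simp [hc0 k hkI, hki]
  -- maximal elements are dominant on I
  have hdom : ∀ γ, IsMax γ → ∀ i ∈ I, 0 ≤ ⟪γ, C.simple i⟫ := by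
    intro γ hγ i hiI
    by_contra hneg
    push_neg at hneg
    have hF2 := hadd γ hγ.1 i hiI hneg
    have heq : γ + C.simple i = γ := by
      refine hγ.2 _ hF2 ⟨fun k => if k = i then 1 else 0, ?_⟩
      rw [add_sub_cancel_left]
      exact (C.sum_indicator i).symm
    exact C.simple_ne_zero i (by
      have := congrArg (fun x => x - γ) heq
      simpa using this)
  -- maximal elements have full support on I
  have hfull : ∀ γ (c : Fin n → ℕ), IsMax γ → (∀ i, i ∉ I → c i = 0) →
      γ = ∑ i, (c i : ℝ) • C.simple i → ∀ i ∈ I, 1 ≤ c i := by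
    intro γ c hγ hc0 hrep i hiI
    have hγne : γ ≠ 0 := fun h => C.h0 (h ▸ C.rplus_sub hγ.1.1)
    have hex : ∃ u, 1 ≤ c u := by
      by_contra h
      push_neg at h
      have h' : ∀ u, c u = 0 := fun u => by have := h u; omega
      exact hγne (by rw [hrep]; exact Finset.sum_eq_zero fun u _ => by simp [h' u])
    obtain ⟨u, hu⟩ := hex
    have huI : u ∈ I := by
      by_contra h
      have := hc0 u h
      omega
    have hall : ∀ v, Relation.ReflTransGen
        (fun a b => a ∈ I ∧ b ∈ I ∧ adj C.simple a b) u v → 1 ≤ c v := by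
      intro v hv
      induction hv with
      | refl => exact hu
      | @tail w v' hab hbc ih =>
        obtain ⟨hbI, hvI, hadjbv⟩ := hbc
        by_contra hcv
        push_neg at hcv
        have hcv0 : c v' = 0 := by omega
        have hlt := C.inner_neg_of c _ _ hadjbv.1 hadjbv.2 ih hcv0
        rw [← hrep] at hlt
        exact absurd (hdom γ hγ _ hvI) (by linarith)
    exact hall i (hconn u huI i hiI)
  -- the element of maximal height
  obtain ⟨θ, hθF, hθmax⟩ := Set.exists_max_image F φ hFfin hFne
  have hIsMaxθ : IsMax θ := ⟨hθF, fun δ hδ ⟨e, he⟩ => hzero θ δ e he (hθmax δ hδ)⟩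
  obtain ⟨hθR, m, hm0, hmrep⟩ := hθF
  have hθmemF : θ ∈ F := ⟨hθR, m, hm0, hmrep⟩
  have hθdom : ∀ i ∈ I, 0 ≤ ⟪θ, C.simple i⟫ := hdom θ hIsMaxθ
  have hθfull : ∀ i ∈ I, 1 ≤ m i := hfull θ m hIsMaxθ hm0 hmrep
  have hθθ : ⟪θ, θ⟫ = 2 := C.hlaced _ (C.rplus_sub hθR)
  have hstar : ∃ i, 0 < (m i : ℝ) * ⟪C.simple i, θ⟫ := by
    by_contra h
    push_neg at h
    have h1 : ⟪θ, θ⟫ ≤ 0 := by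
      nth_rewrite 1 [hmrep]
      rw [C.inner_sum_left]
      exact Finset.sum_nonpos fun i _ => h i
    linarith
  -- uniqueness of the maximal element
  have huniq : ∀ γ, IsMax γ → γ = θ := by
    intro γ hγ
    by_cases hcase : γ = θ
    · exact hcase
    obtain ⟨hγR, c, hc0, hcrep⟩ := hγ.1
    have hpos : 0 < ⟪γ, θ⟫ := by
      rw [hcrep, C.inner_sum_left]
      apply Finset.sum_pos'
      · intro k _
        by_cases hk : k ∈ I
        · exact mul_nonneg (Nat.cast_nonneg _)
            (by rw [real_inner_comm]; exact hθdom k hk)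
        · simp [hc0 k hk]
      · obtain ⟨istar, histar⟩ := hstar
        have histarI : istar ∈ I := by
          by_contra h
          rw [hm0 istar h] at histar
          simp at histar
        have h1 : 1 ≤ c istar := hfull γ c hγ hc0 hcrep istar histarI
        have h2 : 0 < ⟪C.simple istar, θ⟫ := by
          by_contra h
          push_neg at h
          have := mul_nonpos_of_nonneg_of_nonpos (Nat.cast_nonneg (m istar)) h
          linarith
        refine ⟨istar, Finset.mem_univ _, mul_pos ?_ h2⟩
        exact_mod_cast Nat.lt_of_lt_of_le Nat.zero_lt_one h1
    have hsub : θ - γ ∈ C.Rset := by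
      refine C.root_sub (C.rplus_sub hθR) (C.rplus_sub hγR) ?_ (Ne.symm hcase)
      rw [real_inner_comm]; exact hpos
    rw [C.hR] at hsub
    rcases hsub with hsub | hsub
    · obtain ⟨d, hd⟩ := C.hpos_sum _ hsub
      exact (hγ.2 θ hθmemF ⟨d, hd⟩).symm
    · have hsub' : -(θ - γ) ∈ C.Rplus := by simpa using hsub
      obtain ⟨d, hd⟩ := C.hpos_sum _ hsub'
      rw [neg_sub] at hd
      exact hIsMaxθ.2 γ ⟨hγR, c, hc0, hcrep⟩ ⟨d, hd⟩
  -- domination of all elements of F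
  have hdomin : ∀ γ ∈ F, ∃ d : Fin n → ℕ, θ - γ = ∑ i, (d i : ℝ) • C.simple i := by
    intro γ hγ
    set G : Set (V n) := {δ | δ ∈ F ∧
      ∃ e : Fin n → ℕ, δ - γ = ∑ i, (e i : ℝ) • C.simple i} with hGdef
    have hGfin : G.Finite := hFfin.subset fun δ hδ => hδ.1
    have hGne : G.Nonempty := ⟨γ, hγ, 0, by simp⟩
    obtain ⟨δ, hδG, hδmax⟩ := Set.exists_max_image G φ hGfin hGne
    have hδIsMax : IsMax δ := by
      refine ⟨hδG.1, fun δ' hδ' he' => ?_⟩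
      obtain ⟨e', he'⟩ := he'
      obtain ⟨_, e, he⟩ := hδG
      have hδ'G : δ' ∈ G := by
        refine ⟨hδ', fun i => e i + e' i, ?_⟩
        have hsplit : δ' - γ = (δ - γ) + (δ' - δ) := by abel
        rw [hsplit, he, he', ← Finset.sum_add_distrib]
        exact Finset.sum_congr rfl fun i _ => by push_cast; rw [add_smul]
      exact hzero δ δ' e' he' (hδmax δ' hδ'G)
    have hδθ : δ = θ := huniq δ hδIsMax
    obtain ⟨_, e, he⟩ := hδG
    exact ⟨e, by rw [← hδθ]; exact he⟩
  exact ⟨θ, m, hθR, hm0, hmrep, hθfull, hθdom, fun γ hγR hγrep => hdomin γ ⟨hγR, hγrep⟩⟩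

lemma coeff_bound (I : Set (Fin n)) (x θ : V n) (l m : Fin n → ℕ)
    (hx : x = ∑ i, (l i : ℝ) • C.simple i)
    (hθ : θ = ∑ i, (m i : ℝ) • C.simple i)
    (hIl : ∀ i ∈ I, 1 ≤ l i) (hms : ∀ i, i ∉ I → m i = 0)
    (hxI : ∀ i ∈ I, 0 ≤ ⟪x, C.simple i⟫) (hθI : ∀ i ∈ I, 0 ≤ ⟪θ, C.simple i⟫)
    (hθθ : ⟪θ, θ⟫ = 2) : ∀ i, m i ≤ l i := by
  classical
  by_contra hcon
  push_neg at hcon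
  obtain ⟨i0, hi0⟩ := hcon
  set ν : Fin n → ℕ := fun i => if l i < m i then m i - l i else 0 with hν
  have hTI : ∀ i, l i < m i → i ∈ I := by
    intro i h
    by_contra hiI
    rw [hms i hiI] at h
    omega
  set z := ∑ i, (ν i : ℝ) • C.simple i with hz
  have hzne : z ≠ 0 := by
    apply C.sum_ne_zero_of_ne
    refine ⟨i0, ?_⟩
    simp only [hν, if_pos hi0]
    omega
  have hz2 : 2 ≤ ⟪z, z⟫ := by
    obtain ⟨N, hN⟩ := C.even_norm (∑ i, ν i) ν rfl
    rw [← hz] at hN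
    have hzpos : 0 < ⟪z, z⟫ :=
      lt_of_le_of_ne real_inner_self_nonneg (Ne.symm (fun h => hzne (inner_self_eq_zero.mp h)))
    have hNpos : (0:ℝ) < 2 * N := hN ▸ hzpos
    have : (0:ℤ) < N := by
      by_contra h
      push_neg at h
      have : (N:ℝ) ≤ 0 := by exact_mod_cast h
      linarith
    have : (1:ℤ) ≤ N := this
    have : (1:ℝ) ≤ N := by exact_mod_cast this
    rw [hN]
    linarith
  -- lower bound for ⟪x - θ, z⟫
  have hlow : -(∑ j, (ν j : ℝ) * ⟪θ, C.simple j⟫) ≤ ⟪x - θ, z⟫ := by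
    rw [hz, C.inner_sum_right, ← Finset.sum_neg_distrib]
    apply Finset.sum_le_sum
    intro j _
    by_cases hj : l j < m j
    · have hjI := hTI j hj
      have h1 : ⟪x - θ, C.simple j⟫ = ⟪x, C.simple j⟫ - ⟪θ, C.simple j⟫ :=
        inner_sub_left _ _ _
      have h2 := hxI j hjI
      have h3 : -⟪θ, C.simple j⟫ ≤ ⟪x - θ, C.simple j⟫ := by rw [h1]; linarith
      calc -((ν j : ℝ) * ⟪θ, C.simple j⟫) = (ν j : ℝ) * (-⟪θ, C.simple j⟫) := by ring
        _ ≤ (ν j : ℝ) * ⟪x - θ, C.simple j⟫ :=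
            mul_le_mul_of_nonneg_left h3 (Nat.cast_nonneg _)
    · simp [hν, hj]
  -- upper bound for ⟪x - θ, z⟫
  have hω0 : ∀ i, l i < m i → (l i : ℝ) - m i + ν i = 0 := by
    intro i h
    simp only [hν, if_pos h]
    rw [Nat.cast_sub h.le]
    ring
  have hωnn : ∀ i, 0 ≤ (l i : ℝ) - m i + ν i := by
    intro i
    by_cases h : l i < m i
    · rw [hω0 i h]
    · have h1 : m i ≤ l i := not_lt.mp h
      have h2 : (m i : ℝ) ≤ l i := by exact_mod_cast h1
      have hν0 : (ν i : ℝ) = 0 := by simp [hν, h]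
      rw [hν0]
      linarith
  have hwrep : x - θ + z = ∑ i, ((l i : ℝ) - m i + ν i) • C.simple i := by
    rw [hx, hθ, hz, ← Finset.sum_sub_distrib, ← Finset.sum_add_distrib]
    exact Finset.sum_congr rfl fun i _ => by rw [add_smul, sub_smul]
  have hwz : ⟪x - θ + z, z⟫ ≤ 0 := by
    rw [hwrep, C.inner_sum_left]
    apply Finset.sum_nonpos
    intro i _
    by_cases h : l i < m i
    · rw [hω0 i h]
      simp
    · apply mul_nonpos_of_nonneg_of_nonpos (hωnn i)
      rw [hz, C.inner_sum_right]
      apply Finset.sum_nonpos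
      intro j _
      by_cases hj : l j < m j
      · have hij : i ≠ j := fun he => h (he ▸ hj)
        exact mul_nonpos_of_nonneg_of_nonpos (Nat.cast_nonneg _) (C.simple_pair_nonpos hij)
      · simp [hν, hj]
  have hsplit : ⟪x - θ, z⟫ = ⟪x - θ + z, z⟫ - ⟪z, z⟫ := by
    rw [inner_add_left]; ring
  have hbig : 2 ≤ ∑ j, (ν j : ℝ) * ⟪θ, C.simple j⟫ := by
    have := hsplit ▸ hlow
    linarith
  -- upper estimate of the same sum
  have hexp : ⟪θ, θ⟫ = ∑ j, (m j : ℝ) * ⟪θ, C.simple j⟫ := by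
    nth_rewrite 2 [hθ]
    rw [C.inner_sum_right]
  have hpoint : ∀ j, (ν j : ℝ) * ⟪θ, C.simple j⟫
      + (if l j < m j then (l j : ℝ) else 0) * ⟪θ, C.simple j⟫
      ≤ (m j : ℝ) * ⟪θ, C.simple j⟫ := by
    intro j
    by_cases h : l j < m j
    · have he : (ν j : ℝ) + l j = m j := by
        simp only [hν, if_pos h]
        rw [Nat.cast_sub h.le]
        ring
      rw [if_pos h]
      have h2 : (ν j : ℝ) * ⟪θ, C.simple j⟫ + (l j : ℝ) * ⟪θ, C.simple j⟫
          = (m j : ℝ) * ⟪θ, C.simple j⟫ := by rw [← he]; ring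
      linarith
    · rw [if_neg h]
      have hν0 : (ν j : ℝ) = 0 := by simp [hν, h]
      have hmp : 0 ≤ (m j : ℝ) * ⟪θ, C.simple j⟫ := by
        by_cases hj : j ∈ I
        · exact mul_nonneg (Nat.cast_nonneg _) (hθI j hj)
        · rw [hms j hj]
          simp
      rw [hν0]
      simpa using hmp
  have hsum2 : (∑ j, (ν j : ℝ) * ⟪θ, C.simple j⟫)
      + ∑ j, (if l j < m j then (l j : ℝ) else 0) * ⟪θ, C.simple j⟫ ≤ 2 := by
    rw [← hθθ, hexp, ← Finset.sum_add_distrib]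
    exact Finset.sum_le_sum fun j _ => hpoint j
  have hPnn : ∀ j ∈ Finset.univ, 0 ≤ (if l j < m j then (l j : ℝ) else 0) * ⟪θ, C.simple j⟫ := by
    intro j _
    by_cases h : l j < m j
    · rw [if_pos h]
      exact mul_nonneg (Nat.cast_nonneg _) (hθI j (hTI j h))
    · rw [if_neg h, zero_mul]
  have hP0 : ∑ j, (if l j < m j then (l j : ℝ) else 0) * ⟪θ, C.simple j⟫ = 0 := by
    have h1 : ∑ j, (if l j < m j then (l j : ℝ) else 0) * ⟪θ, C.simple j⟫ ≤ 0 := by linarith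
    exact le_antisymm h1 (Finset.sum_nonneg hPnn)
  have hPzero := (Finset.sum_eq_zero_iff_of_nonneg hPnn).mp hP0
  have hfinal : ∑ j, (ν j : ℝ) * ⟪θ, C.simple j⟫ = 0 := by
    apply Finset.sum_eq_zero
    intro j _
    by_cases h : l j < m j
    · have h1 := hPzero j (Finset.mem_univ j)
      rw [if_pos h] at h1
      have hlj : 1 ≤ l j := hIl j (hTI j h)
      have hlj' : (1:ℝ) ≤ l j := by exact_mod_cast hlj
      have hp : ⟪θ, C.simple j⟫ = 0 := by
        rcases mul_eq_zero.mp h1 with h2 | h2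
        · exfalso; linarith
        · exact h2
      rw [hp, mul_zero]
    · simp [hν, h]
  linarith

theorem main (b : V n) (hbdom : ∀ i, ⟪b, C.simple i⟫ ≤ 0) :
    ∀ (N : ℕ) (l : Fin n → ℕ) (c' : V n), (∀ i, ⟪c', C.simple i⟫ ≤ 0) →
    (∑ i, l i) ≤ N → c' - b = ∑ i, (l i : ℝ) • C.simple i →
    Relation.ReflTransGen (Step C.Rplus C.simple b) c' b := by
  intro N
  induction N with
  | zero =>
    intro l c' hdom hN hrep
    have hl0 : ∀ i, l i = 0 := by
      intro i
      have := Nat.le_zero.mp hN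
      exact (Finset.sum_eq_zero_iff.mp this) i (Finset.mem_univ i)
    have hcb : c' - b = 0 := by
      rw [hrep]
      exact Finset.sum_eq_zero fun i _ => by simp [hl0 i]
    have : c' = b := sub_eq_zero.mp hcb
    rw [this]
  | succ N ih =>
    intro l c' hdom hN hrep
    by_cases hl0 : ∀ i, l i = 0
    · have hcb : c' - b = 0 := by
        rw [hrep]
        exact Finset.sum_eq_zero fun i _ => by simp [hl0 i]
      have : c' = b := sub_eq_zero.mp hcb
      rw [this]
    · push_neg at hl0
      set x := c' - b with hxdef
      have hxrep : x = ∑ i, (l i : ℝ) • C.simple i := hrep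
      have hxne : x ≠ 0 := by
        rw [hxrep]
        exact C.sum_ne_zero_of_ne hl0
      have hxx : 0 < ⟪x, x⟫ :=
        lt_of_le_of_ne real_inner_self_nonneg (Ne.symm fun h => hxne (inner_self_eq_zero.mp h))
      have hi0ex : ∃ i, 1 ≤ l i ∧ 0 < ⟪x, C.simple i⟫ := by
        by_contra h
        push_neg at h
        have h1 : ⟪x, x⟫ ≤ 0 := by
          nth_rewrite 1 [hxrep]
          rw [C.inner_sum_left]
          apply Finset.sum_nonpos
          intro i _
          by_cases hli : 1 ≤ l i
          · refine mul_nonpos_of_nonneg_of_nonpos (Nat.cast_nonneg _) ?_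
            rw [real_inner_comm]
            exact h i hli
          · have : l i = 0 := by omega
            simp [this]
        linarith
      obtain ⟨i0, hi0l, hi0x⟩ := hi0ex
      set J : Set (Fin n) := {j | ⟪b - c', C.simple j⟫ ≤ 0} with hJ
      have hbc : ∀ j, ⟪b - c', C.simple j⟫ = -⟪x, C.simple j⟫ := by
        intro j
        have : b - c' = -x := by rw [hxdef]; abel
        rw [this, inner_neg_left]
      have hJx : ∀ j, j ∈ J ↔ 0 ≤ ⟪x, C.simple j⟫ := by
        intro j
        rw [hJ]
        simp only [Set.mem_setOf_eq, hbc j]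
        constructor <;> intro h <;> linarith
      set r : Fin n → Fin n → Prop :=
        fun a c => a ∈ J ∧ c ∈ J ∧ adj C.simple a c with hr
      set I : Set (Fin n) := {j | j ∈ J ∧ Relation.ReflTransGen r i0 j} with hI
      have hi0J : i0 ∈ J := (hJx i0).mpr (le_of_lt hi0x)
      have hi0I : i0 ∈ I := ⟨hi0J, Relation.ReflTransGen.refl⟩
      have hIJ : I ⊆ J := fun j hj => hj.1
      have hIclosed : ∀ j ∈ I, ∀ k ∈ J, adj C.simple j k → k ∈ I := by
        intro j hj k hk hadjjk
        exact ⟨hk, hj.2.tail ⟨hj.1, hk, hadjjk⟩⟩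
      have hreach : ∀ j, Relation.ReflTransGen r i0 j →
          Relation.ReflTransGen (fun a c => a ∈ I ∧ c ∈ I ∧ adj C.simple a c) i0 j := by
        intro j hj
        induction hj with
        | refl => exact Relation.ReflTransGen.refl
        | @tail p q hp hpq ih2 =>
          have hpI : p ∈ I := ⟨hpq.1, hp⟩
          have hqI : q ∈ I := ⟨hpq.2.1, hp.tail hpq⟩
          exact ih2.tail ⟨hpI, hqI, hpq.2.2⟩
      have hadjsymm : Symmetric (fun a c => a ∈ I ∧ c ∈ I ∧ adj C.simple a c) := by
        intro a c h
        refine ⟨h.2.1, h.1, Ne.symm h.2.2.1, ?_⟩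
        rw [real_inner_comm]
        exact h.2.2.2
      have hconn : ConnIn C.simple I := by
        intro j hj k hk
        exact Relation.ReflTransGen.trans
          ((@Relation.ReflTransGen.stdSymm _ _ ⟨fun a b h => hadjsymm h⟩).symm _ _ (hreach j hj.2)) (hreach k hk.2)
      have hIsupp : ∀ j, Relation.ReflTransGen r i0 j → 1 ≤ l j := by
        intro j hj
        induction hj with
        | refl => exact hi0l
        | @tail p q hp hpq ih2 =>
          by_contra hq
          push_neg at hq
          have hq0 : l q = 0 := by omega
          have hlt := C.inner_neg_of l p q hpq.2.2.1 hpq.2.2.2 ih2 hq0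
          rw [← hxrep] at hlt
          have := (hJx q).mp hpq.2.1
          linarith
      have hcomp : ∀ j, ⟪b - c', C.simple j⟫ ≤ 0 → j ∉ I → ∀ i ∈ I, ¬ adj C.simple j i := by
        intro j hjJ hjI i hiI hadjji
        refine hjI (hIclosed i hiI j hjJ ?_)
        refine ⟨Ne.symm hadjji.1, ?_⟩
        rw [real_inner_comm]
        exact hadjji.2
      obtain ⟨θ, m, hθR, hm0, hmrep, hmfull, hθdom, hθdomin⟩ :=
        C.highest I ⟨i0, hi0I⟩ hconn
      have hml : ∀ i, m i ≤ l i :=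
        C.coeff_bound I x θ l m hxrep hmrep (fun i hi => hIsupp i hi.2) hm0
          (fun i hi => (hJx i).mp (hIJ hi)) hθdom (C.hlaced _ (C.rplus_sub hθR))
      have hθI0 : ∀ j, j ∉ I → j ∈ J → ⟪θ, C.simple j⟫ = 0 := by
        intro j hjI hjJ
        rw [hmrep, C.inner_sum_left]
        apply Finset.sum_eq_zero
        intro k _
        by_cases hk : m k = 0
        · simp [hk]
        · have hkI : k ∈ I := by
            by_contra h
            exact hk (hm0 k h)
          have hkj : k ≠ j := fun he => hjI (he ▸ hkI)
          have hz : ⟪C.simple k, C.simple j⟫ = 0 := by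
            by_contra hne
            exact hjI (hIclosed k hkI j hjJ ⟨hkj, hne⟩)
          simp [hz]
      have hc''dom : ∀ j, ⟪c' - θ, C.simple j⟫ ≤ 0 := by
        intro j
        rw [inner_sub_left]
        by_cases hjI : j ∈ I
        · have h1 := hθdom j hjI
          have h2 := hdom j
          linarith
        · by_cases hjJ : j ∈ J
          · rw [hθI0 j hjI hjJ]
            have := hdom j
            linarith
          · have hxj : ⟪x, C.simple j⟫ < 0 := by
              by_contra h
              push_neg at h
              exact hjJ ((hJx j).mpr h)
            have hint : ⟪x, C.simple j⟫ = ((∑ i, (l i : ℤ) * C.A i j : ℤ) : ℝ) :=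
              C.inner_int_nat x l hxrep j
            have hle : ⟪x, C.simple j⟫ ≤ -1 := by
              rw [hint] at hxj ⊢
              have h1 : (∑ i, (l i : ℤ) * C.A i j) < 0 := by exact_mod_cast hxj
              have h2 : (∑ i, (l i : ℤ) * C.A i j) ≤ -1 := by omega
              exact_mod_cast h2
            have hθj : (-1 : ℝ) ≤ ⟪θ, C.simple j⟫ := C.pair_ge_neg_one hθR j
            have hbj := hbdom j
            have hxeq : ⟪x, C.simple j⟫ = ⟪c', C.simple j⟫ - ⟪b, C.simple j⟫ := by
              rw [hxdef, inner_sub_left]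
            linarith
      have hstep : Step C.Rplus C.simple b c' (c' - θ) :=
        ⟨I, θ, ⟨i0, hi0I⟩, hIJ, hconn, hcomp, ⟨hθR, ⟨m, hm0, hmrep⟩, hθdomin⟩, rfl, hc''dom⟩
      have hnext : (c' - θ) - b = ∑ i, ((l i - m i : ℕ) : ℝ) • C.simple i := by
        have h1 : (c' - θ) - b = x - θ := by rw [hxdef]; abel
        rw [h1, hxrep, hmrep, ← Finset.sum_sub_distrib]
        refine Finset.sum_congr rfl fun i _ => ?_
        rw [← sub_smul, Nat.cast_sub (hml i)]
      have hsum : (∑ i, (l i - m i)) ≤ N := by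
        have h1 : (∑ i, (l i - m i)) < ∑ i, l i := by
          refine Finset.sum_lt_sum (fun i _ => Nat.sub_le _ _) ⟨i0, Finset.mem_univ _, ?_⟩
          have h2 := hmfull i0 hi0I
          have h3 := hml i0
          omega
        omega
      exact Relation.ReflTransGen.head hstep (ih _ _ hc''dom hsum hnext)

end Ctx

/-- In a simply-laced (type `A`, `D`, `E`) irreducible root system, if `b, c ∈ P₋`
are antidominant with `b ≺ c` (i.e. `c − b ∈ Q₊ \ {0}`), then `b` is obtained from
`c` by a chain of steps, each subtracting the highest root of the subsystem
generated by a connected component of `{i : (b − current, αᵢ) ≤ 0}`, every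
intermediate weight remaining antidominant. -/
theorem chain_to_smaller_antidominant (n : ℕ)
    (Rset Rplus : Set (V n)) (simple : Fin n → V n)
    (hfin : Rset.Finite)
    (hR : Rset = Rplus ∪ (-Rplus)) (hdisj : Disjoint Rplus (-Rplus))
    (h0 : (0 : V n) ∉ Rset)
    (hsimple : ∀ i, simple i ∈ Rplus)
    (hindep : LinearIndependent ℝ simple)
    (hpos_sum : ∀ α ∈ Rplus, ∃ c : Fin n → ℕ, α = ∑ i, (c i : ℝ) • simple i)
    (hlaced : ∀ α ∈ Rset, ⟪α, α⟫ = 2)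
    (hrefl : ∀ α ∈ Rset, ∀ β ∈ Rset, β - ⟪β, α⟫ • α ∈ Rset)
    (hcart : ∀ α ∈ Rset, ∀ β ∈ Rset, ∃ m : ℤ, ⟪β, α⟫ = m)
    (hirr : ∀ S T : Set (V n), S ∪ T = Rset → (∀ a ∈ S, ∀ b ∈ T, ⟪a, b⟫ = 0) →
      S = ∅ ∨ T = ∅)
    (b c : V n)
    (hbdom : ∀ i, ⟪b, simple i⟫ ≤ 0) (hcdom : ∀ i, ⟪c, simple i⟫ ≤ 0)
    (hlt : ∃ l : Fin n → ℕ, c - b = ∑ i, (l i : ℝ) • simple i)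
    (hne : b ≠ c) :
    Relation.ReflTransGen (Step Rplus simple b) c b := by
  obtain ⟨l, hl⟩ := hlt
  let C : Ctx n := ⟨Rset, Rplus, simple, hfin, hR, hdisj, h0, hsimple, hindep,
    hpos_sum, hlaced, hrefl, hcart⟩
  exact C.main b hbdom (∑ i, l i) l c hcdom le_rfl hl


end SimplyLacedChain

end
end

section
/- The Gauss sum identity: for every positive integer N, the sum over m from 0 to 2N−1 of exp(π i m² / (2N)) equals (1 + i)·√N. -/
open Complex Filter Topology Real


lemma rexp_half_log {a : ℝ} (ha : 0 < a) : Real.exp (Real.log a / 2) = Real.sqrt a := by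
  rw [Real.sqrt_eq_rpow, Real.rpow_def_of_pos ha]
  ring_nf

lemma cpow_half_eq {x : ℂ} (hx : x ≠ 0) :
    x ^ (1/2 : ℂ) = (Real.sqrt ‖x‖ : ℂ) * Complex.exp ((Complex.arg x / 2 : ℝ) * I) := by
  rw [Complex.cpow_def_of_ne_zero hx, Complex.log]
  rw [← rexp_half_log (norm_pos_iff.mpr hx), show ((Real.log ‖x‖ : ℂ) + x.arg * I) * (1/2)
      = (Real.log ‖x‖ / 2 : ℝ) + ((x.arg / 2 : ℝ) * I) by push_cast; ring,
    Complex.exp_add, Complex.ofReal_exp]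

lemma cpow_half_mul {a b : ℂ} (ha : a ≠ 0) (hb : b ≠ 0)
    (h : a.arg + b.arg ∈ Set.Ioc (-Real.pi) Real.pi) :
    (a * b) ^ (1/2 : ℂ) = a ^ (1/2 : ℂ) * b ^ (1/2 : ℂ) := by
  rw [cpow_half_eq ha, cpow_half_eq hb, cpow_half_eq (mul_ne_zero ha hb), norm_mul,
    Complex.arg_mul ha hb h, Real.sqrt_mul (norm_nonneg a)]
  have : cexp (↑(a.arg / 2) * I) * cexp (↑(b.arg / 2) * I) = cexp (↑((a.arg + b.arg) / 2) * I) := by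
    rw [← Complex.exp_add]; congr 1; push_cast; ring
  rw [← this]
  push_cast
  ring

lemma ofReal_cpow_half {r : ℝ} (hr : 0 ≤ r) : (r : ℂ) ^ (1/2 : ℂ) = (Real.sqrt r : ℂ) := by
  rw [show ((1/2 : ℂ)) = ((1/2 : ℝ) : ℂ) by push_cast; ring, ← Complex.ofReal_cpow hr,
    ← Real.sqrt_eq_rpow]

noncomputable def thetaK : ℝ := ∑' n : ℤ, Real.exp (-Real.pi * (n : ℝ) ^ 2)

lemma summable_thetaK : Summable (fun n : ℤ => Real.exp (-Real.pi * (n : ℝ) ^ 2)) := by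
  have := summable_pow_mul_jacobiTheta₂_term_bound 0 one_pos 0
  simpa using this

lemma theta_sub_one_bound {z τ : ℂ} (hz : z.im = 0) (hτ : 1 ≤ τ.im) :
    ‖jacobiTheta₂ z τ - 1‖ ≤ (Real.exp Real.pi * thetaK) * Real.exp (-Real.pi * τ.im) := by
  have hτ0 : 0 < τ.im := lt_of_lt_of_le one_pos hτ
  have hs := hasSum_jacobiTheta₂_term z hτ0
  have h1 : HasSum (fun n : ℤ => jacobiTheta₂_term n z τ - if n = 0 then 1 else 0)
      (jacobiTheta₂ z τ - 1) := by
    simpa using hs.sub (hasSum_ite_eq (0 : ℤ) (1 : ℂ))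
  rw [← h1.tsum_eq]
  have hbb : HasSum (fun n : ℤ => Real.exp (-Real.pi * (τ.im - 1)) * Real.exp (-Real.pi * (n : ℝ) ^ 2))
      (Real.exp (-Real.pi * (τ.im - 1)) * thetaK) := summable_thetaK.hasSum.mul_left _
  have key : ‖∑' n : ℤ, (jacobiTheta₂_term n z τ - if n = 0 then 1 else 0)‖ ≤
      Real.exp (-Real.pi * (τ.im - 1)) * thetaK := by
    refine tsum_of_norm_bounded hbb fun n => ?_
    by_cases hn : n = 0
    · subst hn
      simp only [if_pos]
      have : jacobiTheta₂_term 0 z τ = 1 := by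
        simp [jacobiTheta₂_term]
      rw [this]
      simp only [sub_self, norm_zero]
      positivity
    · rw [if_neg hn, sub_zero, norm_jacobiTheta₂_term, hz]
      rw [← Real.exp_add]
      apply Real.exp_le_exp.2
      have h1n : (1 : ℝ) ≤ (n : ℝ) ^ 2 := by
        have := Int.one_le_abs (by exact_mod_cast hn : n ≠ 0)
        have : (1:ℝ) ≤ (|n| : ℤ) := by exact_mod_cast this
        calc (1:ℝ) ≤ ((|n| : ℤ):ℝ) := this
        _ ≤ ((|n| : ℤ):ℝ)^2 := le_self_pow₀ (by linarith) two_ne_zero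
        _ = (n:ℝ)^2 := by push_cast; exact sq_abs _
      ring_nf
      nlinarith [mul_nonneg (mul_nonneg Real.pi_pos.le (sub_nonneg.2 h1n)) (sub_nonneg.2 hτ)]
  calc ‖∑' n : ℤ, (jacobiTheta₂_term n z τ - if n = 0 then 1 else 0)‖
      ≤ Real.exp (-Real.pi * (τ.im - 1)) * thetaK := key
    _ = (Real.exp Real.pi * thetaK) * Real.exp (-Real.pi * τ.im) := by
        rw [show -Real.pi * (τ.im - 1) = Real.pi + -Real.pi * τ.im by ring, Real.exp_add]
        ring

lemma theta_tendsto_one {z : ℂ} (hz : z.im = 0) {α : Type*} {l : Filter α} {f : α → ℂ}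
    (hf : Tendsto (fun t => (f t).im) l atTop) :
    Tendsto (fun t => jacobiTheta₂ z (f t)) l (𝓝 1) := by
  rw [← tendsto_sub_nhds_zero_iff]
  apply squeeze_zero_norm' (a := fun t => (Real.exp Real.pi * thetaK) * Real.exp (-Real.pi * (f t).im))
  · filter_upwards [hf.eventually_ge_atTop 1] with t ht
    exact theta_sub_one_bound hz ht
  · have h2 : Tendsto (fun t => -Real.pi * (f t).im) l atBot :=
      (hf.const_mul_atTop_of_neg (neg_lt_zero.mpr Real.pi_pos))
    have := (Real.tendsto_exp_atBot.comp h2).const_mul (Real.exp Real.pi * thetaK)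
    simpa using this

/-- The equivalence `Fin c × ℤ ≃ ℤ` sending `(m, k)` to `c * k + m`. -/
def finIntEquiv (c : ℕ) (hc : 0 < c) : Fin c × ℤ ≃ ℤ where
  toFun p := (c : ℤ) * p.2 + (p.1 : ℤ)
  invFun n := (⟨(n % c).toNat, by
      have h0 : (0:ℤ) < (c:ℤ) := by exact_mod_cast hc
      have := Int.emod_lt_of_pos n h0
      have h2 := Int.emod_nonneg n h0.ne'
      omega⟩, n / c)
  left_inv := by
    rintro ⟨m, k⟩
    have h0 : (0:ℤ) < (c:ℤ) := by exact_mod_cast hc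
    have hm : ((m : ℤ)) % c = m := Int.emod_eq_of_lt (by positivity) (by exact_mod_cast m.2)
    have hrw : (c : ℤ) * k + (m : ℤ) = (m : ℤ) + (c : ℤ) * k := by ring
    ext
    · simp only [hrw, Int.add_mul_emod_self_left, hm, Int.toNat_natCast]
    · have hdiv : (m : ℤ) / (c : ℤ) = 0 :=
        Int.ediv_eq_zero_of_lt (by positivity) (by exact_mod_cast m.2)
      simp only [hrw, Int.add_mul_ediv_left _ _ h0.ne', hdiv, zero_add]
  right_inv := by
    intro n
    have h0 : (0:ℤ) < (c:ℤ) := by exact_mod_cast hc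
    simp only
    rw [Int.toNat_of_nonneg (Int.emod_nonneg n h0.ne')]
    exact Int.mul_ediv_add_emod n c
  
lemma tsum_int_residue {f : ℤ → ℂ} (hf : Summable f) {c : ℕ} (hc : 0 < c) :
    ∑' n : ℤ, f n = ∑ m ∈ Finset.range c, ∑' k : ℤ, f ((c : ℤ) * k + m) := by
  rw [← (finIntEquiv c hc).tsum_eq f]
  have hsum : Summable (fun p : Fin c × ℤ => f (finIntEquiv c hc p)) :=
    hf.comp_injective (finIntEquiv c hc).injective
  rw [Summable.tsum_prod hsum, tsum_fintype]
  exact Fin.sum_univ_eq_sum_range (fun m => ∑' k : ℤ, f ((c:ℤ) * k + m)) c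


lemma theta_shift (z τ : ℂ) (j : ℤ) : jacobiTheta₂ z (τ + 2*j) = jacobiTheta₂ z τ := by
  unfold jacobiTheta₂ jacobiTheta₂_term
  refine tsum_congr fun n => ?_
  rw [show 2*(π:ℂ)*I*n*z + π*I*n^2*(τ+2*j) = (2*(π:ℂ)*I*n*z + π*I*n^2*τ) + ((n^2*j : ℤ) : ℂ)*(2*π*I) by
    push_cast; ring, Complex.exp_add, Complex.exp_int_mul_two_pi_mul_I, mul_one]

-- splitting of the theta series into residue classes mod 2N
lemma splitA (N : ℕ) (hN : 0 < N) {t : ℝ} (ht : 0 < t) :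
    jacobiTheta₂ 0 (1/(2*(N:ℂ)) + I*(t:ℝ)) = ∑ m ∈ Finset.range (2*N),
      cexp ((π:ℂ)*I*(m:ℂ)^2/(2*(N:ℂ)) + π*I*(m:ℂ)^2*(I*(t:ℝ))) *
        jacobiTheta₂ (2*(N:ℂ)*(m:ℂ)*(I*(t:ℝ))) ((2*(N:ℂ))^2*(I*(t:ℝ))) := by
  set τ : ℂ := 1/(2*(N:ℂ)) + I*(t:ℝ) with hτ
  have hτim : 0 < τ.im := by simp [hτ, ht]
  have hsum : Summable (fun n : ℤ => jacobiTheta₂_term n 0 τ) :=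
    (summable_jacobiTheta₂_term_iff 0 τ).2 hτim
  have hNC : (2*(N:ℂ)) ≠ 0 := by
    simp only [ne_eq, mul_eq_zero, OfNat.ofNat_ne_zero, Nat.cast_eq_zero, false_or]
    omega
  calc jacobiTheta₂ 0 τ = ∑' n : ℤ, jacobiTheta₂_term n 0 τ := rfl
    _ = ∑ m ∈ Finset.range (2*N), ∑' k : ℤ, jacobiTheta₂_term ((2*N : ℤ)*k + m) 0 τ := by
        rw [tsum_int_residue hsum (by omega : 0 < 2*N)]
        norm_cast
    _ = _ := by
        refine Finset.sum_congr rfl fun m hm => ?_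
        rw [show jacobiTheta₂ (2*(N:ℂ)*(m:ℂ)*(I*(t:ℝ))) ((2*(N:ℂ))^2*(I*(t:ℝ)))
            = ∑' k : ℤ, jacobiTheta₂_term k (2*(N:ℂ)*(m:ℂ)*(I*(t:ℝ))) ((2*(N:ℂ))^2*(I*(t:ℝ))) from rfl,
          ← tsum_mul_left]
        refine tsum_congr fun k => ?_
        unfold jacobiTheta₂_term
        rw [← Complex.exp_add]
        rw [show 2*(π:ℂ)*I*(((2*N : ℤ)*k + m : ℤ):ℂ)*0 + π*I*(((2*N : ℤ)*k + m : ℤ):ℂ)^2*τ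
            = ((π:ℂ)*I*(m:ℂ)^2/(2*(N:ℂ)) + π*I*(m:ℂ)^2*(I*(t:ℝ))
              + (2*(π:ℂ)*I*(k:ℂ)*(2*(N:ℂ)*(m:ℂ)*(I*(t:ℝ))) + π*I*(k:ℂ)^2*((2*(N:ℂ))^2*(I*(t:ℝ)))))
              + (((N:ℤ)*k^2 + m*k : ℤ):ℂ)*(2*π*I) by
          rw [hτ]; push_cast; have hN0 : (N:ℂ) ≠ 0 := by exact_mod_cast hN.ne'
          field_simp; ring]
        rw [Complex.exp_add, Complex.exp_int_mul_two_pi_mul_I, mul_one]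



lemma feA (N : ℕ) (hN : 0 < N) {t : ℝ} (ht : 0 < t) (m : ℕ) :
    jacobiTheta₂ (2*(N:ℂ)*(m:ℂ)*(I*(t:ℝ))) ((2*(N:ℂ))^2*(I*(t:ℝ))) =
      (1/((2*N*Real.sqrt t : ℝ) : ℂ)) * cexp (-((π:ℂ)*I*(m:ℂ)^2*(I*(t:ℝ)))) *
        jacobiTheta₂ ((m:ℂ)/(2*(N:ℂ))) (I * ((1/((2*N:ℝ)^2*t) : ℝ) : ℂ)) := by
  have hNC : (2*(N:ℂ)) ≠ 0 := by
    simp only [ne_eq, mul_eq_zero, OfNat.ofNat_ne_zero, Nat.cast_eq_zero, false_or]; omega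
  have htC : ((t:ℂ)) ≠ 0 := by exact_mod_cast ht.ne'
  have hNR : (0:ℝ) < 2*N := by positivity
  rw [jacobiTheta₂_functional_equation]
  congr 1
  · congr 1
    · -- the cpow factor
      rw [show -I * ((2*(N:ℂ))^2*(I*(t:ℝ))) = (((2*N:ℝ)^2*t : ℝ) : ℂ) by
          push_cast; ring_nf; rw [Complex.I_sq]; ring,
        ofReal_cpow_half (by positivity)]
      congr 2
      rw [Real.sqrt_mul (by positivity), Real.sqrt_sq hNR.le]
    · -- the exponential factor
      congr 1
      field_simp
      ring_nf
      rw [mul_comm (N:ℂ), mul_assoc, mul_inv_cancel₀ (by exact_mod_cast hN.ne' : (N:ℂ) ≠ 0), mul_one]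
  · -- the theta argument
    congr 1
    · field_simp
    · have hx : (((2*N:ℝ)^2*t : ℝ):ℂ) ≠ 0 := by
        push_cast
        intro h
        rw [mul_eq_zero] at h
        rcases h with h | h
        · rw [sq_eq_zero_iff] at h
          norm_cast at h
          omega
        · exact htC h
      rw [show ((2*(N:ℂ))^2*(I*(t:ℝ))) = I * (((2*N:ℝ)^2*t : ℝ):ℂ) by push_cast; ring]
      rw [show (I : ℂ) * (((2*N:ℝ)^2*t : ℝ):ℂ) = (((2*N:ℝ)^2*t : ℝ):ℂ) * I by ring]
      rw [div_eq_mul_inv, mul_inv, Complex.inv_I]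
      rw [one_div]
      push_cast
      field_simp

lemma Achain (N : ℕ) (hN : 0 < N) {t : ℝ} (ht : 0 < t) :
    ((2*N*Real.sqrt t : ℝ) : ℂ) * jacobiTheta₂ 0 (1/(2*(N:ℂ)) + I*(t:ℝ)) =
      ∑ m ∈ Finset.range (2*N), cexp ((π:ℂ)*I*(m:ℂ)^2/(2*(N:ℂ))) *
        jacobiTheta₂ ((m:ℂ)/(2*(N:ℂ))) (I * ((1/((2*N:ℝ)^2*t) : ℝ) : ℂ)) := by
  rw [splitA N hN ht, Finset.mul_sum]
  refine Finset.sum_congr rfl fun m hm => ?_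
  rw [feA N hN ht m]
  have h1 : ((2*N*Real.sqrt t : ℝ) : ℂ) ≠ 0 := by
    have : (0:ℝ) < 2*N*Real.sqrt t := by positivity
    exact_mod_cast this.ne'
  have key : ∀ (u Θ a b : ℂ), u ≠ 0 → u * (cexp (a+b) * (1/u * cexp (-b) * Θ)) = cexp a * Θ := by
    intro u Θ a b hu
    calc u * (cexp (a+b) * (1/u * cexp (-b) * Θ))
        = (u * (1/u)) * (cexp (a+b) * cexp (-b)) * Θ := by ring
      _ = cexp a * Θ := by
          rw [mul_one_div_cancel hu, ← Complex.exp_add, add_neg_cancel_right, one_mul]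
  exact key _ _ _ _ h1

lemma sqrt_two_N {N : ℕ} (hN : 0 < N) : Real.sqrt (2*N) * (Real.sqrt 2 / 2) = Real.sqrt N := by
  rw [div_eq_mul_inv, ← mul_assoc, ← Real.sqrt_mul (by positivity),
    show (2*(N:ℝ))*2 = 4*N by ring, Real.sqrt_mul (by norm_num),
    show (4:ℝ) = 2^2 by norm_num, Real.sqrt_sq (by norm_num)]
  ring

lemma two_N_ne {N : ℕ} (hN : 0 < N) : (2*(N:ℂ)) ≠ 0 := by
  have h2N : (0:ℝ) < 2*N := by
    have : (0:ℕ) < 2*N := by omega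
    exact_mod_cast this
  have : ((2*N:ℝ):ℂ) ≠ 0 := Complex.ofReal_ne_zero.2 h2N.ne'
  exact_mod_cast this

lemma neg_I_two_N_ne {N : ℕ} (hN : 0 < N) : (-I*(2*(N:ℂ))) ≠ 0 :=
  mul_ne_zero (neg_ne_zero.2 I_ne_zero) (two_N_ne hN)

lemma neg_I_mul_cpow_half {N : ℕ} (hN : 0 < N) :
    (-I*(2*(N:ℂ))) ^ (1/2:ℂ) = (Real.sqrt N : ℂ) * (1 - I) := by
  have h2N : (0:ℝ) < 2*N := by positivity
  have hne : -I*(2*(N:ℂ)) ≠ 0 := neg_I_two_N_ne hN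
  have habs : ‖(-I*(2*(N:ℂ)))‖ = 2*N := by
    rw [norm_mul]
    simp
  have harg : (-I*(2*(N:ℂ))).arg = -(π/2) := by
    rw [show -I*(2*(N:ℂ)) = ((2*N:ℝ):ℂ)*(-I) by push_cast; ring,
      Complex.arg_real_mul _ h2N, Complex.arg_neg_I]
  rw [cpow_half_eq hne, habs, harg,
    show (-(π/2)/2 : ℝ) = -(π/4) by ring,
    show ((-(π/4) : ℝ) : ℂ) * I = ((-(π/4) : ℝ) : ℂ) * I from rfl]
  rw [Complex.exp_mul_I]
  rw [← Complex.ofReal_cos, ← Complex.ofReal_sin, Real.cos_neg, Real.sin_neg,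
    Real.cos_pi_div_four, Real.sin_pi_div_four]
  rw [← sqrt_two_N hN]
  push_cast
  ring

lemma Bconst (N : ℕ) (hN : 0 < N) {t : ℝ} (ht : 0 < t) :
    ((2*N*Real.sqrt t : ℝ) : ℂ) * (1/(-I*(1/(2*(N:ℂ)) + I*(t:ℝ)))^(1/2:ℂ) *
      (1/(-I*(I*(2*(N:ℂ))^2*(t:ℝ)/(1+I*(2*(N:ℂ))*(t:ℝ))))^(1/2:ℂ))) = (1+I) * (Real.sqrt N : ℂ) := by
  have h2N : (0:ℝ) < 2*N := by positivity
  have hNC : (2*(N:ℂ)) ≠ 0 := two_N_ne hN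
  have htC : ((t:ℂ)) ≠ 0 := by exact_mod_cast ht.ne'
  have hden : (1 + I*(2*(N:ℂ))*(t:ℝ)) ≠ 0 := by
    intro h
    have := congrArg Complex.re h
    simp at this
  have hN0 : (N:ℂ) ≠ 0 := by exact_mod_cast hN.ne'
  have hd' : (1 + I*2*(N:ℂ)*(t:ℂ)) ≠ 0 := by
    rw [show (1 + I*2*(N:ℂ)*(t:ℂ)) = 1 + I*(2*(N:ℂ))*(t:ℂ) by ring]; exact hden
  set a : ℂ := -I*(1/(2*(N:ℂ)) + I*(t:ℝ)) with ha_def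
  set b : ℂ := -I*(I*(2*(N:ℂ))^2*(t:ℝ)/(1+I*(2*(N:ℂ))*(t:ℝ))) with hb_def
  have ha_re : a.re = t := by
    rw [ha_def]
    simp [Complex.div_re]
  have hb_eq : b = (((2*N:ℝ)^2*t : ℝ):ℂ)/(1+I*(2*(N:ℂ))*(t:ℝ)) := by
    rw [hb_def]
    field_simp
    push_cast
    ring_nf
    all_goals simp only [Complex.I_sq, show (I:ℂ)^3 = -I from by rw [pow_succ, Complex.I_sq]; ring]
    all_goals ring
  have hb_re : 0 < b.re := by
    rw [hb_eq, Complex.div_re]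
    have h1 : ((((2*N:ℝ)^2*t : ℝ):ℂ)).re = (2*N:ℝ)^2*t := Complex.ofReal_re _
    have h2 : ((((2*N:ℝ)^2*t : ℝ):ℂ)).im = 0 := Complex.ofReal_im _
    rw [h1, h2]
    have h3 : (1+I*(2*(N:ℂ))*(t:ℝ)).re = 1 := by simp
    have h4 : 0 < Complex.normSq (1+I*(2*(N:ℂ))*(t:ℝ)) := by
      rw [Complex.normSq_pos]; exact hden
    rw [h3]
    have : (0:ℝ) < (2*N:ℝ)^2*t := by positivity
    rw [zero_mul, zero_div, add_zero]
    positivity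
  have ha_re' : 0 < a.re := by rw [ha_re]; exact ht
  have ha0 : a ≠ 0 := by intro h; rw [h] at ha_re'; simp at ha_re'
  have hb0 : b ≠ 0 := by intro h; rw [h] at hb_re; simp at hb_re
  have harga : |a.arg| < π/2 := Complex.abs_arg_lt_pi_div_two_iff.2 (Or.inl ha_re')
  have hargb : |b.arg| < π/2 := Complex.abs_arg_lt_pi_div_two_iff.2 (Or.inl hb_re)
  have hmem : a.arg + b.arg ∈ Set.Ioc (-π) π := by
    rw [abs_lt] at harga hargb
    constructor <;> [linarith; linarith]
  have hab : a * b = (t:ℝ) * (-I*(2*(N:ℂ))) := by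
    rw [ha_def, hb_eq]
    field_simp
    push_cast
    ring_nf
    all_goals simp only [Complex.I_sq, show (I:ℂ)^3 = -I from by rw [pow_succ, Complex.I_sq]; ring]
    all_goals ring
  rw [div_mul_div_comm, ← cpow_half_mul ha0 hb0 hmem, hab,
    cpow_half_mul (by exact_mod_cast ht.ne') (neg_I_two_N_ne hN)
      (by
        rw [Complex.arg_ofReal_of_nonneg ht.le,
          show -I*(2*(N:ℂ)) = ((2*N:ℝ):ℂ)*(-I) by push_cast; ring,
          Complex.arg_real_mul _ h2N, Complex.arg_neg_I]
        constructor
        · linarith [Real.pi_pos]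
        · linarith [Real.pi_pos]),
    ofReal_cpow_half ht.le, neg_I_mul_cpow_half hN]
  have hsN : (Real.sqrt N : ℂ) ≠ 0 := by
    have : (0:ℝ) < Real.sqrt N := Real.sqrt_pos.2 (by exact_mod_cast hN)
    exact_mod_cast this.ne'
  have hst : ((Real.sqrt t : ℝ):ℂ) ≠ 0 := by
    have : (0:ℝ) < Real.sqrt t := Real.sqrt_pos.2 ht
    exact_mod_cast this.ne'
  have h1I : (1 - I : ℂ) ≠ 0 := by
    intro h
    have := congrArg Complex.im h
    simp at this
  have hNN : (Real.sqrt N : ℂ) * (Real.sqrt N : ℂ) = (N:ℂ) := by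
    rw [← Complex.ofReal_mul, Real.mul_self_sqrt (by positivity)]
    norm_cast
  have hItwo : ((1+I)*(1-I) : ℂ) = 2 := by
    rw [show ((1+I)*(1-I) : ℂ) = 1 - I*I by ring, Complex.I_mul_I]
    norm_num
  simp only [one_mul]
  rw [mul_one_div, div_eq_iff (by
    exact mul_ne_zero hst (mul_ne_zero hsN h1I))]
  rw [show (1+I)*((Real.sqrt N:ℝ):ℂ)*(((Real.sqrt t:ℝ):ℂ)*(((Real.sqrt N:ℝ):ℂ)*(1-I)))
      = ((1+I)*(1-I))*(((Real.sqrt N:ℝ):ℂ)*((Real.sqrt N:ℝ):ℂ))*((Real.sqrt t:ℝ):ℂ) by ring,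
    hItwo, hNN]
  push_cast
  ring

lemma Bchain (N : ℕ) (hN : 0 < N) {t : ℝ} (ht : 0 < t) :
    ((2*N*Real.sqrt t : ℝ) : ℂ) * jacobiTheta₂ 0 (1/(2*(N:ℂ)) + I*(t:ℝ)) =
      ((1+I) * (Real.sqrt N : ℂ)) *
        jacobiTheta₂ 0 (I * ((1/((2*N:ℝ)^2*t) : ℝ) : ℂ) - 1/(2*(N:ℂ))) := by
  have hNC := two_N_ne hN
  have htC : (t:ℂ) ≠ 0 := by exact_mod_cast ht.ne'
  have hden : (1 + I*(2*(N:ℂ))*(t:ℝ)) ≠ 0 := by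
    intro h
    have := congrArg Complex.re h
    simp at this
  have hN0 : (N:ℂ) ≠ 0 := by exact_mod_cast hN.ne'
  have hd' : (1 + I*2*(N:ℂ)*(t:ℂ)) ≠ 0 := by
    rw [show (1 + I*2*(N:ℂ)*(t:ℂ)) = 1 + I*(2*(N:ℂ))*(t:ℂ) by ring]; exact hden
  have hτ0 : (1/(2*(N:ℂ)) + I*(t:ℝ)) ≠ 0 := by
    intro h
    have := congrArg Complex.im h
    simp at this
    exact ht.ne' this
  have hσ0 : (I*(2*(N:ℂ))^2*(t:ℝ)/(1+I*(2*(N:ℂ))*(t:ℝ))) ≠ 0 := by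
    apply div_ne_zero _ hden
    exact mul_ne_zero (mul_ne_zero I_ne_zero (pow_ne_zero 2 hNC)) htC
  rw [jacobiTheta₂_functional_equation 0 (1/(2*(N:ℂ)) + I*(t:ℝ))]
  simp only [ne_eq, OfNat.ofNat_ne_zero, not_false_eq_true, zero_pow, mul_zero, zero_div,
    Complex.exp_zero, mul_one]
  have hden2 : ((1:ℂ) + (N:ℂ)*I*(t:ℝ)*2) ≠ 0 := by
    intro h
    apply hden
    rw [← h]
    ring
  rw [show (-1 : ℂ)/(1/(2*(N:ℂ)) + I*(t:ℝ))
      = I*(2*(N:ℂ))^2*(t:ℝ)/(1+I*(2*(N:ℂ))*(t:ℝ)) + 2*(-(N:ℂ)) by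
    rw [div_eq_iff hτ0]
    field_simp
    ring_nf
    all_goals simp only [Complex.I_sq, show (I:ℂ)^3 = -I from by rw [pow_succ, Complex.I_sq]; ring]
    all_goals ring]
  have hshift := theta_shift 0 (I*(2*(N:ℂ))^2*(t:ℝ)/(1+I*(2*(N:ℂ))*(t:ℝ))) (-(N:ℤ))
  push_cast at hshift
  rw [hshift]
  rw [jacobiTheta₂_functional_equation 0 (I*(2*(N:ℂ))^2*(t:ℝ)/(1+I*(2*(N:ℂ))*(t:ℝ)))]
  simp only [ne_eq, OfNat.ofNat_ne_zero, not_false_eq_true, zero_pow, mul_zero, zero_div,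
    Complex.exp_zero, mul_one]
  rw [show (-1:ℂ)/(I*(2*(N:ℂ))^2*(t:ℝ)/(1+I*(2*(N:ℂ))*(t:ℝ)))
      = I * ((1/((2*N:ℝ)^2*t) : ℝ):ℂ) - 1/(2*(N:ℂ)) by
    push_cast
    field_simp
    ring_nf
    all_goals simp only [Complex.I_sq, show (I:ℂ)^3 = -I from by rw [pow_succ, Complex.I_sq]; ring]
    all_goals ring]
  have hc := Bconst N hN ht
  rw [← hc]
  ring


/-- **The Gauss sum identity.** For every positive integer `N`,
`∑_{m=0}^{2N−1} exp(π i m² / (2N)) = (1 + i) √N`. -/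
theorem gauss_sum (N : ℕ) (hN : 0 < N) :
    ∑ m ∈ Finset.range (2 * N),
        Complex.exp (Real.pi * Complex.I * (m : ℂ) ^ 2 / (2 * (N : ℂ))) =
      (1 + Complex.I) * (Real.sqrt N : ℂ) := by
  have h2N : (0:ℝ) < 2*N := by
    have : (0:ℕ) < 2*N := by omega
    exact_mod_cast this
  set F : ℝ → ℂ := fun t =>
    ((2*N*Real.sqrt t : ℝ) : ℂ) * jacobiTheta₂ 0 (1/(2*(N:ℂ)) + I*(t:ℝ)) with hF
  have hatTop : Tendsto (fun t : ℝ => 1/((2*N:ℝ)^2*t)) (𝓝[>] (0:ℝ)) atTop := by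
    have h := tendsto_inv_nhdsGT_zero.const_mul_atTop
      (inv_pos.2 (by positivity : (0:ℝ) < (2*N:ℝ)^2))
    exact h.congr (fun x => by rw [one_div, mul_inv])
  -- A-side limit
  have hA : Tendsto F (𝓝[>] (0:ℝ))
      (𝓝 (∑ m ∈ Finset.range (2*N), cexp ((π:ℂ)*I*(m:ℂ)^2/(2*(N:ℂ))))) := by
    have hsum : Tendsto (fun t : ℝ => ∑ m ∈ Finset.range (2*N),
        cexp ((π:ℂ)*I*(m:ℂ)^2/(2*(N:ℂ))) *
          jacobiTheta₂ ((m:ℂ)/(2*(N:ℂ))) (I * ((1/((2*N:ℝ)^2*t) : ℝ) : ℂ)))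
        (𝓝[>] (0:ℝ))
        (𝓝 (∑ m ∈ Finset.range (2*N), cexp ((π:ℂ)*I*(m:ℂ)^2/(2*(N:ℂ))) * 1)) := by
      refine tendsto_finset_sum _ fun m hm => ?_
      refine Filter.Tendsto.const_mul _ ?_
      refine theta_tendsto_one ?_ ?_
      · rw [show (m:ℂ)/(2*(N:ℂ)) = ((m/(2*N) : ℝ):ℂ) by push_cast; ring]
        exact Complex.ofReal_im _
      · refine hatTop.congr fun t => ?_
        rw [Complex.mul_im, Complex.ofReal_re, Complex.ofReal_im, Complex.I_re, Complex.I_im]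
        ring
    simp only [mul_one] at hsum
    refine hsum.congr' ?_
    filter_upwards [self_mem_nhdsWithin] with t ht
    exact (Achain N hN ht).symm
  -- B-side limit
  have hB : Tendsto F (𝓝[>] (0:ℝ)) (𝓝 ((1 + I) * (Real.sqrt N : ℂ))) := by
    have hth : Tendsto (fun t : ℝ => ((1+I) * (Real.sqrt N : ℂ)) *
        jacobiTheta₂ 0 (I * ((1/((2*N:ℝ)^2*t) : ℝ) : ℂ) - 1/(2*(N:ℂ))))
        (𝓝[>] (0:ℝ)) (𝓝 (((1+I) * (Real.sqrt N : ℂ)) * 1)) := by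
      refine Filter.Tendsto.const_mul _ ?_
      refine theta_tendsto_one rfl ?_
      refine hatTop.congr fun t => ?_
      have h0 : ((1:ℂ)/(2*(N:ℂ))).im = 0 := by
        rw [show (1:ℂ)/(2*(N:ℂ)) = ((1/(2*N):ℝ):ℂ) by push_cast; ring]
        exact Complex.ofReal_im _
      rw [Complex.sub_im, Complex.mul_im, Complex.ofReal_re, Complex.ofReal_im,
        Complex.I_re, Complex.I_im, h0]
      ring
    simp only [mul_one] at hth
    refine hth.congr' ?_
    filter_upwards [self_mem_nhdsWithin] with t ht
    exact (Bchain N hN ht).symm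
  exact tendsto_nhds_unique hA hB
end
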